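/- Let γ be a convex closed plane curve with curvature k(θ) > 0 in the outward normal angle parameterization, length L, and enclosed area A. For every β ≥ 0: ∫₀^{2π} k^{β−1} dθ ≤ (L/(2π)) ∫₀^{2π} k^β dθ. -/
import Mathlib


open MeasureTheory Real

/-- For a convex closed curve with positive curvature `k(θ)` and length
`L = ∫₀^{2π} k⁻¹ dθ`, for every `β ≥ 0`:
`∫₀^{2π} k^(β−1) dθ ≤ (L/(2π)) ∫₀^{2π} k^β dθ`. -/
theorem stmt_11 (k : ℝ → ℝ) (hk : Continuous k)
    (hper : Function.Periodic k (2 * Real.pi))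
    (hkpos : ∀ θ, 0 < k θ) (L : ℝ)
    (hL : L = ∫ θ in (0:ℝ)..(2 * Real.pi), (k θ)⁻¹) :
    ∀ β : ℝ, 0 ≤ β →
      (∫ θ in (0:ℝ)..(2 * Real.pi), k θ ^ (β - 1)) ≤
        (L / (2 * Real.pi)) * ∫ θ in (0:ℝ)..(2 * Real.pi), k θ ^ β := by
  intro β hβ
  have pi_pos := Real.pi_pos
  set f : ℝ → ℝ := fun θ => k θ ^ β with hf
  set g : ℝ → ℝ := fun θ => (k θ)⁻¹ with hg
  have hfc : Continuous f := hk.rpow_const (fun x => Or.inl (hkpos x).ne')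
  have hgc : Continuous g := hk.inv₀ (fun x => (hkpos x).ne')
  have hfi : IntervalIntegrable f volume 0 (2 * Real.pi) := hfc.intervalIntegrable _ _
  have hgi : IntervalIntegrable g volume 0 (2 * Real.pi) := hgc.intervalIntegrable _ _
  have hfgi : IntervalIntegrable (fun θ => f θ * g θ) volume 0 (2 * Real.pi) :=
    (hfc.mul hgc).intervalIntegrable _ _
  -- pointwise Chebyshev inequality
  have key : ∀ x y : ℝ, f x * g x + f y * g y ≤ f x * g y + f y * g x := by
    intro x y
    have hx := hkpos x
    have hy := hkpos y
    rcases le_total (k x) (k y) with h | h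
    · have h1 : k x ^ β ≤ k y ^ β := Real.rpow_le_rpow hx.le h hβ
      have h2 : (k y)⁻¹ ≤ (k x)⁻¹ := by
        apply inv_anti₀ hx h
      simp only [hf, hg]
      nlinarith [mul_nonneg (sub_nonneg.2 h1) (sub_nonneg.2 h2)]
    · have h1 : k y ^ β ≤ k x ^ β := Real.rpow_le_rpow hy.le h hβ
      have h2 : (k x)⁻¹ ≤ (k y)⁻¹ := by
        apply inv_anti₀ hy h
      simp only [hf, hg]
      nlinarith [mul_nonneg (sub_nonneg.2 h1) (sub_nonneg.2 h2)]
  set If : ℝ := ∫ θ in (0:ℝ)..(2 * Real.pi), f θ with hIf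
  set Ig : ℝ := ∫ θ in (0:ℝ)..(2 * Real.pi), g θ with hIg
  set Ifg : ℝ := ∫ θ in (0:ℝ)..(2 * Real.pi), f θ * g θ with hIfg
  -- step 1 : integrate in y
  have step1 : ∀ x : ℝ, 2 * Real.pi * (f x * g x) + Ifg ≤ f x * Ig + g x * If := by
    intro x
    have h1 : (∫ y in (0:ℝ)..(2 * Real.pi), (f x * g x + f y * g y)) ≤
        ∫ y in (0:ℝ)..(2 * Real.pi), (f x * g y + f y * g x) := by
      apply intervalIntegral.integral_mono_on (by positivity)
      · exact (intervalIntegrable_const).add hfgi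
      · exact (hgi.const_mul _).add (hfi.mul_const _)
      · intro y _; exact key x y
    have e1 : (∫ y in (0:ℝ)..(2 * Real.pi), (f x * g x + f y * g y)) =
        2 * Real.pi * (f x * g x) + Ifg := by
      rw [intervalIntegral.integral_add intervalIntegrable_const hfgi,
        intervalIntegral.integral_const, hIfg]
      simp only [smul_eq_mul, sub_zero]
    have e2 : (∫ y in (0:ℝ)..(2 * Real.pi), (f x * g y + f y * g x)) =
        f x * Ig + g x * If := by
      rw [intervalIntegral.integral_add (hgi.const_mul _) (hfi.mul_const _),
        intervalIntegral.integral_const_mul, intervalIntegral.integral_mul_const]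
      ring
    rw [e1, e2] at h1
    exact h1
  -- step 2 : integrate in x
  have step2 : 2 * Real.pi * Ifg ≤ If * Ig := by
    have h1 : (∫ x in (0:ℝ)..(2 * Real.pi), (2 * Real.pi * (f x * g x) + Ifg)) ≤
        ∫ x in (0:ℝ)..(2 * Real.pi), (f x * Ig + g x * If) := by
      apply intervalIntegral.integral_mono_on (by positivity)
      · exact (hfgi.const_mul _).add intervalIntegrable_const
      · exact (hfi.mul_const _).add (hgi.mul_const _)
      · intro x _; exact step1 x
    have e1 : (∫ x in (0:ℝ)..(2 * Real.pi), (2 * Real.pi * (f x * g x) + Ifg)) =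
        2 * Real.pi * Ifg + 2 * Real.pi * Ifg := by
      rw [intervalIntegral.integral_add (hfgi.const_mul _) intervalIntegrable_const,
        intervalIntegral.integral_const_mul, intervalIntegral.integral_const, hIfg]
      simp only [smul_eq_mul, sub_zero]
    have e2 : (∫ x in (0:ℝ)..(2 * Real.pi), (f x * Ig + g x * If)) =
        If * Ig + Ig * If := by
      rw [intervalIntegral.integral_add (hfi.mul_const _) (hgi.mul_const _),
        intervalIntegral.integral_mul_const, intervalIntegral.integral_mul_const]
    rw [e1, e2] at h1
    linarith
  -- identify the left-hand side
  have eL : (∫ θ in (0:ℝ)..(2 * Real.pi), k θ ^ (β - 1)) = Ifg := by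
    apply intervalIntegral.integral_congr
    intro θ _
    have := hkpos θ
    simp only [hf, hg]
    rw [Real.rpow_sub this, Real.rpow_one, div_eq_mul_inv]
  have hLIg : L = Ig := hL
  rw [eL, hLIg]
  rw [div_mul_eq_mul_div, le_div_iff₀ (by positivity)]
  nlinarith [step2]
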